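/- (Entropic smoothing of the adversarial problem adds entropic regularization to the primal.) Let n ∈ ℕ, μ, ν ∈ ℝⁿ histograms with strictly positive entries, η ≥ 0, and F : ℝ^{n×n} → ℝ ∪ {+∞} proper, convex, lower semicontinuous, with F(π₀) < +∞ for some π₀ ∈ Π(μ,ν). Define the entropy-regularized OT value S^η_c(μ,ν) = min_{π∈Π(μ,ν)} [ ⟨c,π⟩ + η Σ_{ij} π_{ij}(log π_{ij} − 1) ] (with 0·(log 0 − 1) = 0). Then sup_{c ∈ ℝ^{n×n}} [ S^η_c(μ,ν) − F*(c) ] = min_{π∈Π(μ,ν)} [ F(π) + η Σ_{ij} π_{ij}(log π_{ij} − 1) ]. -/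

import Mathlib

open scoped BigOperators

/-- `μ` is a histogram: nonnegative entries summing to `1`. -/
def IsHistogram {n : ℕ} (μ : Fin n → ℝ) : Prop := (∀ i, 0 ≤ μ i) ∧ ∑ i, μ i = 1

/-- The transportation polytope `Π(μ,ν)`: matrices with nonnegative entries,
row sums `μ` and column sums `ν`. -/
def DCouplings {n : ℕ} (μ ν : Fin n → ℝ) : Set (Fin n → Fin n → ℝ) :=
  {π | (∀ i j, 0 ≤ π i j) ∧ (∀ i, ∑ j, π i j = μ i) ∧ (∀ j, ∑ i, π i j = ν j)}

/-- Frobenius inner product `⟨c, π⟩`. -/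
def frob {n : ℕ} (c π : Fin n → Fin n → ℝ) : ℝ := ∑ i, ∑ j, c i j * π i j

/-- Discrete optimal transport cost `OT_c(μ,ν)`. -/
noncomputable def dOT {n : ℕ} (c : Fin n → Fin n → ℝ) (μ ν : Fin n → ℝ) : ℝ :=
  ⨅ π : DCouplings μ ν, frob c π.1

/-- Convex conjugate of `G : ℝ^{n×n} → ℝ ∪ {+∞}`. -/
noncomputable def dconj {n : ℕ} (G : (Fin n → Fin n → ℝ) → EReal)
    (c : Fin n → Fin n → ℝ) : EReal :=
  ⨆ π : Fin n → Fin n → ℝ, ((frob c π : ℝ) : EReal) - G π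

/-- The (negative) entropy `Σ_{ij} π_{ij} (log π_{ij} − 1)`; note that in Lean
`Real.log 0 = 0`, so the convention `0·(log 0 − 1) = 0` holds automatically. -/
noncomputable def negEntropy {n : ℕ} (π : Fin n → Fin n → ℝ) : ℝ :=
  ∑ i, ∑ j, π i j * (Real.log (π i j) - 1)

/-- The entropy-regularized OT value `S^η_c(μ,ν)`. -/
noncomputable def sinkhorn {n : ℕ} (η : ℝ) (c : Fin n → Fin n → ℝ) (μ ν : Fin n → ℝ) : ℝ :=
  ⨅ π : DCouplings μ ν, (frob c π.1 + η * negEntropy π.1)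

/-! ### Auxiliary lemmas -/

/-- Standard basis matrix. -/
def stmt19sing {n : ℕ} (i j : Fin n) : Fin n → Fin n → ℝ :=
  fun a b => (if i = a then (1:ℝ) else 0) * (if j = b then (1:ℝ) else 0)

lemma stmt19_basis_expand {n : ℕ} (π : Fin n → Fin n → ℝ) :
    π = ∑ i, ∑ j, π i j • stmt19sing i j := by
  funext a b
  simp only [Finset.sum_apply, Pi.smul_apply, stmt19sing, smul_eq_mul]
  rw [Finset.sum_comm]
  simp [Finset.sum_ite_eq, mul_ite, ite_mul, Finset.mul_sum]

lemma stmt19_rep {n : ℕ} (f : ((Fin n → Fin n → ℝ) × ℝ) →L[ℝ] ℝ)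
    (π : Fin n → Fin n → ℝ) (t : ℝ) :
    f (π, t) = (∑ i, ∑ j, π i j * f (stmt19sing i j, 0)) + t * f (0, 1) := by
  have h3 : ((π, 0) : (Fin n → Fin n → ℝ) × ℝ)
      = ∑ i, ∑ j, π i j • ((stmt19sing i j, 0) : (Fin n → Fin n → ℝ) × ℝ) := by
    rw [Prod.ext_iff]
    constructor
    · simp only [Prod.fst_sum, Prod.smul_mk]
      exact stmt19_basis_expand π
    · simp [Prod.snd_sum]
  have h1 : (π, t) = ((π, 0) : (Fin n → Fin n → ℝ) × ℝ) + (0, t) := by simp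
  have h2 : ((0, t) : (Fin n → Fin n → ℝ) × ℝ) = t • ((0,1) : (Fin n → Fin n → ℝ) × ℝ) := by
    simp
  rw [h1, map_add, h3, h2, map_smul, map_sum]
  simp only [map_sum, map_smul, smul_eq_mul]

lemma stmt19_phi_bounds {x : ℝ} (h0 : 0 ≤ x) (h1 : x ≤ 1) :
    -1 ≤ x * (Real.log x - 1) ∧ x * (Real.log x - 1) ≤ 0 := by
  rcases eq_or_lt_of_le h0 with h | h
  · simp [← h]
  · have hlog : Real.log x ≤ x - 1 := Real.log_le_sub_one_of_pos h
    have hlogneg : Real.log x ≤ 0 := Real.log_nonpos (le_of_lt h) h1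
    have h2 : -(x * Real.log x) ≤ 1 - x := by
      have := Real.log_le_sub_one_of_pos (show (0:ℝ) < 1/x by positivity)
      rw [Real.log_div one_ne_zero (ne_of_gt h), Real.log_one] at this
      have hx : x * (1/x) = 1 := by field_simp
      nlinarith [mul_le_mul_of_nonneg_left this h0]
    constructor <;> nlinarith

lemma stmt19_entry_le_one {n : ℕ} {μ ν : Fin n → ℝ} (hμ : IsHistogram μ)
    {π : Fin n → Fin n → ℝ} (hπ : π ∈ DCouplings μ ν) (i j : Fin n) :
    π i j ≤ 1 := by
  obtain ⟨hpos, hrow, -⟩ := hπ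
  have h1 : π i j ≤ ∑ j', π i j' :=
    Finset.single_le_sum (fun k _ => hpos i k) (Finset.mem_univ j)
  have h2 : μ i ≤ 1 := by
    rw [← hμ.2]
    exact Finset.single_le_sum (fun k _ => hμ.1 k) (Finset.mem_univ i)
  rw [hrow i] at h1; linarith

lemma stmt19_negEntropy_bounds {n : ℕ} {μ ν : Fin n → ℝ} (hμ : IsHistogram μ)
    {π : Fin n → Fin n → ℝ} (hπ : π ∈ DCouplings μ ν) :
    -(n^2 : ℝ) ≤ negEntropy π ∧ negEntropy π ≤ 0 := by
  constructor
  · have h : ∀ i : Fin n, -(n:ℝ) ≤ ∑ j, π i j * (Real.log (π i j) - 1) := by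
      intro i
      calc -(n:ℝ) = ∑ _j : Fin n, (-1 : ℝ) := by simp
      _ ≤ _ := Finset.sum_le_sum fun j _ =>
          (stmt19_phi_bounds (hπ.1 i j) (stmt19_entry_le_one hμ hπ i j)).1
    calc -((n:ℝ)^2) = ∑ _i : Fin n, -(n:ℝ) := by simp; ring
    _ ≤ _ := Finset.sum_le_sum fun i _ => h i
  · apply Finset.sum_nonpos
    intro i _
    apply Finset.sum_nonpos
    intro j _
    exact (stmt19_phi_bounds (hπ.1 i j) (stmt19_entry_le_one hμ hπ i j)).2

lemma stmt19_negEntropy_continuous {n : ℕ} : Continuous (negEntropy (n := n)) := by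
  unfold negEntropy
  apply continuous_finset_sum
  intro i _
  apply continuous_finset_sum
  intro j _
  have h : ∀ π : Fin n → Fin n → ℝ, π i j * (Real.log (π i j) - 1)
      = π i j * Real.log (π i j) - π i j := by intro π; ring
  simp_rw [h]
  exact (Real.continuous_mul_log.comp ((continuous_apply j).comp (continuous_apply i))).sub
    ((continuous_apply j).comp (continuous_apply i))

lemma stmt19_negEntropy_convex {n : ℕ} {π₁ π₂ : Fin n → Fin n → ℝ}
    (h1 : ∀ i j, 0 ≤ π₁ i j) (h2 : ∀ i j, 0 ≤ π₂ i j)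
    {a b : ℝ} (ha : 0 ≤ a) (hb : 0 ≤ b) (hab : a + b = 1) :
    negEntropy (a • π₁ + b • π₂) ≤ a * negEntropy π₁ + b * negEntropy π₂ := by
  unfold negEntropy
  rw [Finset.mul_sum, Finset.mul_sum, ← Finset.sum_add_distrib]
  apply Finset.sum_le_sum
  intro i _
  rw [Finset.mul_sum, Finset.mul_sum, ← Finset.sum_add_distrib]
  apply Finset.sum_le_sum
  intro j _
  have happ : (a • π₁ + b • π₂) i j = a * π₁ i j + b * π₂ i j := by simp
  rw [happ]
  have key := Real.convexOn_mul_log.2 (Set.mem_Ici.2 (h1 i j)) (Set.mem_Ici.2 (h2 i j)) ha hb hab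
  simp only [smul_eq_mul] at key
  nlinarith [key]

lemma stmt19_isClosed_DCouplings {n : ℕ} (μ ν : Fin n → ℝ) :
    IsClosed (DCouplings μ ν) := by
  have hc : ∀ i j : Fin n, Continuous fun π : Fin n → Fin n → ℝ => π i j :=
    fun i j => (continuous_apply j).comp (continuous_apply i)
  have h1 : IsClosed {π : Fin n → Fin n → ℝ | ∀ i j, 0 ≤ π i j} := by
    have h : {π : Fin n → Fin n → ℝ | ∀ i j, 0 ≤ π i j}
        = ⋂ i, ⋂ j, {π | 0 ≤ π i j} := by ext π; simp
    rw [h]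
    exact isClosed_iInter fun i => isClosed_iInter fun j =>
      isClosed_le continuous_const (hc i j)
  have h2 : IsClosed {π : Fin n → Fin n → ℝ | ∀ i, ∑ j, π i j = μ i} := by
    have h : {π : Fin n → Fin n → ℝ | ∀ i, ∑ j, π i j = μ i}
        = ⋂ i, {π | ∑ j, π i j = μ i} := by ext π; simp
    rw [h]
    exact isClosed_iInter fun i =>
      isClosed_eq (continuous_finset_sum _ fun j _ => hc i j) continuous_const
  have h3 : IsClosed {π : Fin n → Fin n → ℝ | ∀ j, ∑ i, π i j = ν j} := by
    have h : {π : Fin n → Fin n → ℝ | ∀ j, ∑ i, π i j = ν j}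
        = ⋂ j, {π | ∑ i, π i j = ν j} := by ext π; simp
    rw [h]
    exact isClosed_iInter fun j =>
      isClosed_eq (continuous_finset_sum _ fun i _ => hc i j) continuous_const
  have h : DCouplings μ ν = {π : Fin n → Fin n → ℝ | ∀ i j, 0 ≤ π i j}
      ∩ ({π | ∀ i, ∑ j, π i j = μ i} ∩ {π | ∀ j, ∑ i, π i j = ν j}) := by
    ext π; simp [DCouplings, and_assoc]
  rw [h]; exact h1.inter (h2.inter h3)

lemma stmt19_mem_combo {n : ℕ} {μ ν : Fin n → ℝ} {π₁ π₂ : Fin n → Fin n → ℝ}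
    (h1 : π₁ ∈ DCouplings μ ν) (h2 : π₂ ∈ DCouplings μ ν)
    {a b : ℝ} (ha : 0 ≤ a) (hb : 0 ≤ b) (hab : a + b = 1) :
    a • π₁ + b • π₂ ∈ DCouplings μ ν := by
  obtain ⟨p1, r1, c1⟩ := h1
  obtain ⟨p2, r2, c2⟩ := h2
  refine ⟨fun i j => ?_, fun i => ?_, fun j => ?_⟩
  · have h : (a • π₁ + b • π₂) i j = a * π₁ i j + b * π₂ i j := by simp
    rw [h]; exact add_nonneg (mul_nonneg ha (p1 i j)) (mul_nonneg hb (p2 i j))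
  · have h : ∀ j, (a • π₁ + b • π₂) i j = a * π₁ i j + b * π₂ i j := by intro j; simp
    simp_rw [h, Finset.sum_add_distrib, ← Finset.mul_sum, r1, r2]
    rw [← add_mul, hab, one_mul]
  · have h : ∀ i, (a • π₁ + b • π₂) i j = a * π₁ i j + b * π₂ i j := by intro i; simp
    simp_rw [h, Finset.sum_add_distrib, ← Finset.mul_sum, c1, c2]
    rw [← add_mul, hab, one_mul]

lemma stmt19_frob_lower {n : ℕ} (c : Fin n → Fin n → ℝ) {π : Fin n → Fin n → ℝ}
    (h0 : ∀ i j, 0 ≤ π i j) (h1 : ∀ i j, π i j ≤ 1) :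
    -(∑ i, ∑ j, |c i j|) ≤ frob c π := by
  unfold frob
  rw [← Finset.sum_neg_distrib]
  apply Finset.sum_le_sum
  intro i _
  rw [← Finset.sum_neg_distrib]
  apply Finset.sum_le_sum
  intro j _
  have habs : |c i j * π i j| ≤ |c i j| := by
    rw [abs_mul]
    apply mul_le_of_le_one_right (abs_nonneg _)
    rw [abs_of_nonneg (h0 i j)]; exact h1 i j
  nlinarith [neg_abs_le (c i j * π i j)]

/-- (Entropic smoothing of the adversarial problem adds entropic
regularization to the primal.)
`sup_c S^η_c(μ,ν) − F*(c) = min_{π∈Π(μ,ν)} F(π) + η Σ_{ij} π_{ij}(log π_{ij} − 1)`. -/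
theorem stmt19 {n : ℕ} (μ ν : Fin n → ℝ) (hμ : IsHistogram μ) (hν : IsHistogram ν)
    (hμpos : ∀ i, 0 < μ i) (hνpos : ∀ j, 0 < ν j)
    (η : ℝ) (hη : 0 ≤ η)
    (F : (Fin n → Fin n → ℝ) → EReal)
    (hbot : ∀ π, F π ≠ ⊥)
    (hproper : ∃ π, F π ≠ ⊤)
    (hconv : ∀ π₁ π₂ : Fin n → Fin n → ℝ, ∀ a b : ℝ, 0 ≤ a → 0 ≤ b → a + b = 1 →
      F (a • π₁ + b • π₂) ≤ (a : EReal) * F π₁ + (b : EReal) * F π₂)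
    (hlsc : LowerSemicontinuous F)
    (hfin : ∃ π₀ : DCouplings μ ν, F π₀.1 < ⊤) :
    (⨆ c : Fin n → Fin n → ℝ, ((sinkhorn η c μ ν : ℝ) : EReal) - dconj F c)
      = ⨅ π : DCouplings μ ν, (F π.1 + ((η * negEntropy π.1 : ℝ) : EReal)) := by
  classical
  obtain ⟨π₀, hπ₀top⟩ := hfin
  haveI : Nonempty (DCouplings μ ν) := ⟨π₀⟩
  set r₀ := (F π₀.1).toReal with hr₀def
  have hFπ₀ : F π₀.1 = (r₀ : EReal) := (EReal.coe_toReal (ne_of_lt hπ₀top) (hbot _)).symm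
  -- boundedness of the sinkhorn infimum
  have hBdd : ∀ c : Fin n → Fin n → ℝ,
      BddBelow (Set.range fun π : DCouplings μ ν => frob c π.1 + η * negEntropy π.1) := by
    intro c
    refine ⟨-(∑ i, ∑ j, |c i j|) + η * (-(n^2 : ℝ)), ?_⟩
    rintro x ⟨π, rfl⟩
    have h1 := stmt19_frob_lower c π.2.1 (stmt19_entry_le_one hμ π.2)
    have h2 := (stmt19_negEntropy_bounds hμ π.2).1
    have h3 : η * (-(n^2:ℝ)) ≤ η * negEntropy π.1 := mul_le_mul_of_nonneg_left h2 hη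
    exact add_le_add h1 h3
  have hS_le : ∀ (c : Fin n → Fin n → ℝ) (π : DCouplings μ ν),
      sinkhorn η c μ ν ≤ frob c π.1 + η * negEntropy π.1 :=
    fun c π => ciInf_le (hBdd c) π
  -- Easy direction
  have easy : (⨆ c : Fin n → Fin n → ℝ, ((sinkhorn η c μ ν : ℝ) : EReal) - dconj F c)
      ≤ ⨅ π : DCouplings μ ν, (F π.1 + ((η * negEntropy π.1 : ℝ) : EReal)) := by
    apply iSup_le
    intro c
    apply le_iInf
    intro π
    by_cases hFt : F π.1 = ⊤
    · rw [hFt, EReal.top_add_coe]; exact le_top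
    · set r := (F π.1).toReal with hrdef
      have hFr : F π.1 = (r : EReal) := (EReal.coe_toReal hFt (hbot _)).symm
      have hconj_ge : ((frob c π.1 - r : ℝ) : EReal) ≤ dconj F c := by
        have h := le_iSup (fun π' => ((frob c π' : ℝ) : EReal) - F π') π.1
        rw [hFr] at h
        rw [EReal.coe_sub]
        exact h
      by_cases hdc : dconj F c = ⊤
      · rw [hdc, EReal.sub_top]; exact bot_le
      · have hdcb : dconj F c ≠ ⊥ := by
          intro h; rw [h] at hconj_ge; exact absurd (le_bot_iff.1 hconj_ge) (EReal.coe_ne_bot _)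
        set d := (dconj F c).toReal with hddef
        have hd : dconj F c = (d : EReal) := (EReal.coe_toReal hdc hdcb).symm
        have hdge : frob c π.1 - r ≤ d := by
          rw [hd] at hconj_ge; exact EReal.coe_le_coe_iff.1 hconj_ge
        rw [hd, hFr, ← EReal.coe_sub, ← EReal.coe_add, EReal.coe_le_coe_iff]
        have := hS_le c π
        linarith
  refine le_antisymm easy ?_
  -- trivial case: RHS = ⊥
  by_cases hmbot : (⨅ π : DCouplings μ ν, (F π.1 + ((η * negEntropy π.1 : ℝ) : EReal))) = ⊥
  · rw [hmbot]; exact bot_le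
  have hmtop : (⨅ π : DCouplings μ ν, (F π.1 + ((η * negEntropy π.1 : ℝ) : EReal))) ≠ ⊤ := by
    exact ne_top_of_le_ne_top (by rw [hFπ₀, ← EReal.coe_add]; exact EReal.coe_ne_top _)
      (iInf_le _ π₀)
  set mr := (⨅ π : DCouplings μ ν, (F π.1 + ((η * negEntropy π.1 : ℝ) : EReal))).toReal with hmrdef
  have hmr : (⨅ π : DCouplings μ ν, (F π.1 + ((η * negEntropy π.1 : ℝ) : EReal)))
      = (mr : EReal) := (EReal.coe_toReal hmtop hmbot).symm
  rw [hmr]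
  -- the key step: for every ε > 0, mr - ε is below the sup
  have hard : ∀ ε : ℝ, 0 < ε → ((mr - ε : ℝ) : EReal)
      ≤ ⨆ c : Fin n → Fin n → ℝ, ((sinkhorn η c μ ν : ℝ) : EReal) - dconj F c := by
    intro ε hε
    set M : ℝ := |mr| + ε + η * (n^2 : ℝ) + 1 with hMdef
    have hηn2 : 0 ≤ η * (n^2 : ℝ) := mul_nonneg hη (by positivity)
    set A : Set ((Fin n → Fin n → ℝ) × ℝ) := {p | F p.1 ≤ (p.2 : EReal)} with hAdef
    set Bs : Set ((Fin n → Fin n → ℝ) × ℝ) :=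
      {p | p.1 ∈ DCouplings μ ν ∧ -M ≤ p.2 ∧ p.2 + η * negEntropy p.1 ≤ mr - ε} with hBdef
    -- A is closed
    have hAclosed : IsClosed A := by
      have h1 : IsClosed {p : (Fin n → Fin n → ℝ) × EReal | F p.1 ≤ p.2} :=
        hlsc.isClosed_epigraph
      have h2 : A = (fun p : (Fin n → Fin n → ℝ) × ℝ => (p.1, (p.2 : EReal))) ⁻¹'
          {p : (Fin n → Fin n → ℝ) × EReal | F p.1 ≤ p.2} := rfl
      rw [h2]
      exact h1.preimage (continuous_fst.prodMk
        (continuous_coe_real_ereal.comp continuous_snd))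
    -- A is convex
    have hAconv : Convex ℝ A := by
      intro p hp q hq a b ha hb hab
      have hp1 : F p.1 ≤ ((p.2 : ℝ) : EReal) := hp
      have hq1 : F q.1 ≤ ((q.2 : ℝ) : EReal) := hq
      have hp1t : F p.1 ≠ ⊤ := by
        intro h; rw [h] at hp1; exact absurd (top_le_iff.1 hp1) (EReal.coe_ne_top _)
      have hq1t : F q.1 ≠ ⊤ := by
        intro h; rw [h] at hq1; exact absurd (top_le_iff.1 hq1) (EReal.coe_ne_top _)
      have hps : F p.1 = ((F p.1).toReal : EReal) := (EReal.coe_toReal hp1t (hbot _)).symm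
      have hqs : F q.1 = ((F q.1).toReal : EReal) := (EReal.coe_toReal hq1t (hbot _)).symm
      show F (a • p + b • q).1 ≤ (((a • p + b • q).2 : ℝ) : EReal)
      have hfst : (a • p + b • q).1 = a • p.1 + b • q.1 := rfl
      have hsnd : (a • p + b • q).2 = a * p.2 + b * q.2 := rfl
      rw [hfst, hsnd]
      calc F (a • p.1 + b • q.1) ≤ (a : EReal) * F p.1 + (b : EReal) * F q.1 :=
            hconv p.1 q.1 a b ha hb hab
      _ = ((a * (F p.1).toReal + b * (F q.1).toReal : ℝ) : EReal) := by
            conv_lhs => rw [hps, hqs]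
            rw [← EReal.coe_mul, ← EReal.coe_mul, ← EReal.coe_add]
      _ ≤ ((a * p.2 + b * q.2 : ℝ) : EReal) := by
            rw [EReal.coe_le_coe_iff]
            have h1 : (F p.1).toReal ≤ p.2 := by
              rw [hps] at hp1; exact EReal.coe_le_coe_iff.1 hp1
            have h2 : (F q.1).toReal ≤ q.2 := by
              rw [hqs] at hq1; exact EReal.coe_le_coe_iff.1 hq1
            exact add_le_add (mul_le_mul_of_nonneg_left h1 ha)
              (mul_le_mul_of_nonneg_left h2 hb)
    -- Bs is convex
    have hBconv : Convex ℝ Bs := by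
      intro p hp q hq a b ha hb hab
      obtain ⟨hpP, hpM, hpU⟩ := hp
      obtain ⟨hqP, hqM, hqU⟩ := hq
      have hfst : (a • p + b • q).1 = a • p.1 + b • q.1 := rfl
      have hsnd : (a • p + b • q).2 = a * p.2 + b * q.2 := rfl
      refine ⟨?_, ?_, ?_⟩
      · rw [hfst]; exact stmt19_mem_combo hpP hqP ha hb hab
      · rw [hsnd]
        have : -M = a * (-M) + b * (-M) := by rw [← add_mul, hab, one_mul]
        rw [this]
        exact add_le_add (mul_le_mul_of_nonneg_left hpM ha)
          (mul_le_mul_of_nonneg_left hqM hb)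
      · rw [hfst, hsnd]
        have hEc := stmt19_negEntropy_convex hpP.1 hqP.1 ha hb hab
        have h1 : η * negEntropy (a • p.1 + b • q.1)
            ≤ η * (a * negEntropy p.1 + b * negEntropy q.1) :=
          mul_le_mul_of_nonneg_left hEc hη
        have h2 : a * (p.2 + η * negEntropy p.1) ≤ a * (mr - ε) :=
          mul_le_mul_of_nonneg_left hpU ha
        have h3 : b * (q.2 + η * negEntropy q.1) ≤ b * (mr - ε) :=
          mul_le_mul_of_nonneg_left hqU hb
        calc a * p.2 + b * q.2 + η * negEntropy (a • p.1 + b • q.1)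
            ≤ a * p.2 + b * q.2 + η * (a * negEntropy p.1 + b * negEntropy q.1) := by
              linarith
        _ = a * (p.2 + η * negEntropy p.1) + b * (q.2 + η * negEntropy q.1) := by ring
        _ ≤ a * (mr - ε) + b * (mr - ε) := add_le_add h2 h3
        _ = mr - ε := by rw [← add_mul, hab, one_mul]
    -- Bs is compact
    have hBclosed : IsClosed Bs := by
      have h1 : IsClosed {p : (Fin n → Fin n → ℝ) × ℝ | p.1 ∈ DCouplings μ ν} :=
        (stmt19_isClosed_DCouplings μ ν).preimage continuous_fst
      have h2 : IsClosed {p : (Fin n → Fin n → ℝ) × ℝ | -M ≤ p.2} :=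
        isClosed_le continuous_const continuous_snd
      have h3 : IsClosed {p : (Fin n → Fin n → ℝ) × ℝ | p.2 + η * negEntropy p.1 ≤ mr - ε} :=
        isClosed_le (continuous_snd.add
          (continuous_const.mul (stmt19_negEntropy_continuous.comp continuous_fst)))
          continuous_const
      have h4 : Bs = {p : (Fin n → Fin n → ℝ) × ℝ | p.1 ∈ DCouplings μ ν}
          ∩ ({p | -M ≤ p.2} ∩ {p | p.2 + η * negEntropy p.1 ≤ mr - ε}) := by
        ext p; simp [Bs, and_assoc]
      rw [h4]; exact h1.inter (h2.inter h3)
    have hBcpt : IsCompact Bs := by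
      have hK : IsCompact ((Set.univ.pi fun _ : Fin n => Set.univ.pi fun _ : Fin n =>
          Set.Icc (0:ℝ) 1) ×ˢ Set.Icc (-M) (mr + η * (n^2:ℝ))) :=
        (isCompact_univ_pi fun _ => isCompact_univ_pi fun _ => isCompact_Icc).prod
          isCompact_Icc
      apply IsCompact.of_isClosed_subset hK hBclosed
      rintro ⟨π, t⟩ ⟨hπ, hM, hU⟩
      dsimp only at hM hU
      refine ⟨?_, ?_⟩
      · show π ∈ Set.univ.pi fun _ : Fin n => Set.univ.pi fun _ : Fin n => Set.Icc (0:ℝ) 1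
        rw [Set.mem_univ_pi]; intro i
        rw [Set.mem_univ_pi]; intro j
        exact Set.mem_Icc.2 ⟨hπ.1 i j, stmt19_entry_le_one hμ hπ i j⟩
      · show t ∈ Set.Icc (-M) (mr + η * (n^2:ℝ))
        rw [Set.mem_Icc]
        have hE := (stmt19_negEntropy_bounds hμ hπ).1
        have hE' : η * (-(n^2:ℝ)) ≤ η * negEntropy π := mul_le_mul_of_nonneg_left hE hη
        have hneg : η * (-(n^2:ℝ)) = -(η * (n^2:ℝ)) := by ring
        exact ⟨hM, by linarith⟩
    -- disjointness
    have hdisj : Disjoint Bs A := by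
      rw [Set.disjoint_left]
      rintro p ⟨hpP, _, hpU⟩ hpA
      have hmle : (mr : EReal) ≤ F p.1 + ((η * negEntropy p.1 : ℝ) : EReal) := by
        rw [← hmr]
        exact iInf_le _ (⟨p.1, hpP⟩ : DCouplings μ ν)
      have hFp : F p.1 ≤ ((p.2 : ℝ) : EReal) := hpA
      have h2 : F p.1 + ((η * negEntropy p.1 : ℝ) : EReal)
          ≤ ((p.2 : ℝ) : EReal) + ((η * negEntropy p.1 : ℝ) : EReal) :=
        add_le_add hFp le_rfl
      rw [← EReal.coe_add] at h2
      have h3 : (mr : EReal) ≤ ((p.2 + η * negEntropy p.1 : ℝ) : EReal) := le_trans hmle h2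
      rw [EReal.coe_le_coe_iff] at h3
      linarith
    -- Hahn-Banach separation
    obtain ⟨f, u, v, hfB, huv, hfA⟩ :=
      geometric_hahn_banach_compact_closed hBconv hBcpt hAconv hAclosed hdisj
    set c0 : Fin n → Fin n → ℝ := fun i j => f (stmt19sing i j, 0) with hc0def
    set β : ℝ := f (0, 1) with hβdef
    set g : (Fin n → Fin n → ℝ) → ℝ := fun π => ∑ i, ∑ j, π i j * c0 i j with hgdef
    have hrep : ∀ (π : Fin n → Fin n → ℝ) (t : ℝ), f (π, t) = g π + t * β :=
      fun π t => stmt19_rep f π t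
    have hA_ineq : ∀ (π : Fin n → Fin n → ℝ) (r : ℝ), F π ≤ (r : EReal) →
        v < g π + r * β := by
      intro π r h
      have := hfA (π, r) h
      rwa [hrep] at this
    have hB_ineq : ∀ π ∈ DCouplings μ ν,
        g π + (mr - ε - η * negEntropy π) * β < u := by
      intro π hπ
      have hE := stmt19_negEntropy_bounds hμ hπ
      have hmem : ((π, mr - ε - η * negEntropy π) : (Fin n → Fin n → ℝ) × ℝ) ∈ Bs := by
        refine ⟨hπ, ?_, ?_⟩
        · show -M ≤ mr - ε - η * negEntropy π
          have h1 : η * negEntropy π ≤ 0 :=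
            mul_nonpos_of_nonneg_of_nonpos hη hE.2
          have h2 : -|mr| ≤ mr := neg_abs_le mr
          rw [hMdef]
          linarith
        · show mr - ε - η * negEntropy π + η * negEntropy π ≤ mr - ε
          linarith
      have := hfB _ hmem
      rwa [hrep] at this
    -- β > 0
    have hβ0 : v < g π₀.1 + r₀ * β := hA_ineq π₀.1 r₀ (le_of_eq hFπ₀)
    have hβpos : 0 < β := by
      rcases lt_trichotomy β 0 with h | h | h
      · exfalso
        have hβne : β ≠ 0 := ne_of_lt h
        set t : ℝ := r₀ + (g π₀.1 + r₀ * β - v) / (-β) with htdef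
        have htge : r₀ ≤ t := by
          have hq : 0 < (g π₀.1 + r₀ * β - v) / (-β) :=
            div_pos (by linarith) (by linarith)
          rw [htdef]
          linarith
        have h2 := hA_ineq π₀.1 t (by rw [hFπ₀]; exact EReal.coe_le_coe_iff.2 htge)
        rw [htdef] at h2
        have h4 : (r₀ + (g π₀.1 + r₀ * β - v) / (-β)) * β
            = r₀ * β - (g π₀.1 + r₀ * β - v) := by
          rw [div_neg, add_mul, neg_mul, div_mul_cancel₀ _ hβne]
          ring
        rw [h4] at h2
        linarith
      · exfalso
        have h1 := hB_ineq π₀.1 π₀.2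
        rw [h, mul_zero, add_zero] at h1
        rw [h, mul_zero, add_zero] at hβ0
        linarith
      · exact h
    -- the dual variable
    set c : Fin n → Fin n → ℝ := fun i j => -c0 i j / β with hcdef
    have hfrob : ∀ π : Fin n → Fin n → ℝ, frob c π = -g π / β := by
      intro π
      unfold frob
      have h : ∀ i j : Fin n, c i j * π i j = -(π i j * c0 i j) / β := by
        intro i j; rw [hcdef]; ring
      simp_rw [h, ← Finset.sum_div, Finset.sum_neg_distrib]
      rfl
    -- conjugate bound
    have hconj_le : dconj F c ≤ ((-v / β : ℝ) : EReal) := by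
      apply iSup_le
      intro π
      by_cases hFt : F π = ⊤
      · rw [hFt, EReal.sub_top]; exact bot_le
      · set r := (F π).toReal with hrdef
        have hFr : F π = (r : EReal) := (EReal.coe_toReal hFt (hbot _)).symm
        have hv := hA_ineq π r (le_of_eq hFr)
        rw [hFr, ← EReal.coe_sub, EReal.coe_le_coe_iff, hfrob]
        have h1 : (v - g π) / β < r := by
          rw [div_lt_iff₀ hβpos]; linarith
        have h2 : -g π / β - (v - g π) / β = -v / β := by field_simp; ring
        linarith
    have hconj_ge : ((frob c π₀.1 - r₀ : ℝ) : EReal) ≤ dconj F c := by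
      have h := le_iSup (fun π' => ((frob c π' : ℝ) : EReal) - F π') π₀.1
      rw [hFπ₀] at h
      rw [EReal.coe_sub]
      exact h
    have hdctop : dconj F c ≠ ⊤ := by
      intro h; rw [h] at hconj_le
      exact absurd (top_le_iff.1 hconj_le) (EReal.coe_ne_top _)
    have hdcbot : dconj F c ≠ ⊥ := by
      intro h; rw [h] at hconj_ge
      exact absurd (le_bot_iff.1 hconj_ge) (EReal.coe_ne_bot _)
    set d := (dconj F c).toReal with hddef
    have hd : dconj F c = (d : EReal) := (EReal.coe_toReal hdctop hdcbot).symm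
    have hd_le : d ≤ -v / β := by
      rw [hd] at hconj_le; exact EReal.coe_le_coe_iff.1 hconj_le
    -- sinkhorn bound
    have hSge : mr - ε - u / β ≤ sinkhorn η c μ ν := by
      apply le_ciInf
      intro π
      have hb := hB_ineq π.1 π.2
      rw [hfrob]
      have h1 : (g π.1 + (mr - ε - η * negEntropy π.1) * β) / β
          = g π.1 / β + (mr - ε - η * negEntropy π.1) := by
        field_simp
      have h2 : (g π.1 + (mr - ε - η * negEntropy π.1) * β) / β < u / β :=
        (div_lt_div_iff_of_pos_right hβpos).2 hb
      rw [h1] at h2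
      have h3 : -g π.1 / β = -(g π.1 / β) := by ring
      rw [h3]
      linarith
    -- conclude
    have hfinal : ((mr - ε : ℝ) : EReal)
        ≤ ((sinkhorn η c μ ν : ℝ) : EReal) - dconj F c := by
      rw [hd, ← EReal.coe_sub, EReal.coe_le_coe_iff]
      have huvβ : u / β < v / β := (div_lt_div_iff_of_pos_right hβpos).2 huv
      have hvneg : -v / β = -(v / β) := by ring
      linarith
    exact le_trans hfinal
      (le_iSup (fun c' => ((sinkhorn η c' μ ν : ℝ) : EReal) - dconj F c') c)
  -- conclude mr ≤ sup
  by_contra hlt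
  rw [not_le] at hlt
  have h1 := hard 1 one_pos
  have hLbot : (⨆ c : Fin n → Fin n → ℝ, ((sinkhorn η c μ ν : ℝ) : EReal) - dconj F c) ≠ ⊥ := by
    intro h; rw [h] at h1
    exact absurd (le_bot_iff.1 h1) (EReal.coe_ne_bot _)
  have hLtop : (⨆ c : Fin n → Fin n → ℝ, ((sinkhorn η c μ ν : ℝ) : EReal) - dconj F c) ≠ ⊤ := by
    intro h; rw [h] at hlt
    exact absurd hlt (not_lt.2 le_top)
  set L := (⨆ c : Fin n → Fin n → ℝ, ((sinkhorn η c μ ν : ℝ) : EReal) - dconj F c).toReal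
    with hLdef
  have hL : (⨆ c : Fin n → Fin n → ℝ, ((sinkhorn η c μ ν : ℝ) : EReal) - dconj F c)
      = (L : EReal) := (EReal.coe_toReal hLtop hLbot).symm
  rw [hL] at hlt
  have hLlt : L < mr := EReal.coe_lt_coe_iff.1 hlt
  have h2 := hard ((mr - L) / 2) (by linarith)
  rw [hL, EReal.coe_le_coe_iff] at h2
  linarith
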